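/- If N ≥ n, then I x N = G x (G (next x) (⋯ (G (next^[n-1] x) e) ⋯)); equivalently, I x N = r 0, where r : ℕ → b is defined downward by r j = e for j ≥ n and r j = G (next^[j] x) (r (j + 1)) for j < n. In particular, I x N equals the value at x of the bounded recursion R y = if P y then e else G y (R (next y)). -/
import Mathlib


/-- One step of the iterated fold building the stack:
replace the current list `seq` by `seq` itself if `i > seq.length` or `P` holds of the
head of `seq`, and by `(next (head of seq)) :: seq` otherwise. -/
def stackStep {α : Type*} [Inhabited α] (P : α → Prop) [DecidablePred P] (next : α → α)
    (seq : List α) (i : ℕ) : List α :=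
  if i > seq.length ∨ P seq.headI then seq else next seq.headI :: seq

/-- `Stack x N`: starting from the one-element list `[x]`, apply `stackStep` for
`i = 1, …, N` in order. -/
def Stack {α : Type*} [Inhabited α] (P : α → Prop) [DecidablePred P] (next : α → α)
    (x : α) (N : ℕ) : List α :=
  (List.range' 1 N).foldl (stackStep P next) [x]

/-- `I x N`: the left fold over the tail of `Stack x N` with initial value `e` and
step `(cumul, v) ↦ G v cumul`. -/
def Ifold {α β : Type*} [Inhabited α] (P : α → Prop) [DecidablePred P] (next : α → α)
    (G : α → β → β) (e : β) (x : α) (N : ℕ) : β :=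
  ((Stack P next x N).tail).foldl (fun cumul v => G v cumul) e

/-- `r : ℕ → β` defined downward by `r j = e` for `j ≥ n` and
`r j = G (next^[j] x) (r (j + 1))` for `j < n`. -/
def rDown {α β : Type*} (G : α → β → β) (e : β) (next : α → α) (x : α) (n : ℕ) :
    ℕ → β := fun j =>
  if j < n then G (next^[j] x) (rDown G e next x n (j + 1)) else e
termination_by j => n - j

-- auxiliary
def stk {α : Type*} (next : α → α) (x : α) : ℕ → List α
  | 0 => [x]
  | k+1 => next^[k+1] x :: stk next x k

lemma stk_length {α : Type*} (next : α → α) (x : α) (k : ℕ) :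
    (stk next x k).length = k + 1 := by
  induction k with
  | zero => rfl
  | succ k ih => simp [stk, ih]

lemma stk_headI {α : Type*} [Inhabited α] (next : α → α) (x : α) (k : ℕ) :
    (stk next x k).headI = next^[k] x := by
  cases k <;> rfl

lemma Stack_succ {α : Type*} [Inhabited α] (P : α → Prop) [DecidablePred P] (next : α → α)
    (x : α) (k : ℕ) :
    Stack P next x (k+1) = stackStep P next (Stack P next x k) (1 + k) := by
  rw [Stack, List.range'_concat, List.foldl_append]
  simp [Stack, Nat.one_mul]

lemma Stack_eq_stk {α : Type*} [Inhabited α] (P : α → Prop) [DecidablePred P] (next : α → α)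
    (x : α) (n : ℕ) (hlt : ∀ i < n, ¬ P (next^[i] x)) (k : ℕ) (hk : k ≤ n) :
    Stack P next x k = stk next x k := by
  induction k with
  | zero => rfl
  | succ k ih =>
    rw [Stack_succ, ih (Nat.le_of_succ_le hk), stackStep]
    rw [if_neg]
    · rw [stk_headI]
      simp [stk, Function.iterate_succ_apply']
    · push_neg
      rw [stk_length, stk_headI]
      exact ⟨by omega, hlt k (by omega)⟩

lemma Stack_ge {α : Type*} [Inhabited α] (P : α → Prop) [DecidablePred P] (next : α → α)
    (x : α) (n : ℕ) (hn : P (next^[n] x)) (hlt : ∀ i < n, ¬ P (next^[i] x))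
    (N : ℕ) (hN : N ≥ n) :
    Stack P next x N = stk next x n := by
  induction N, hN using Nat.le_induction with
  | base => exact Stack_eq_stk P next x n hlt n le_rfl
  | succ N hN ih =>
    rw [Stack_succ, ih, stackStep, if_pos]
    right
    rw [stk_headI]
    exact hn

lemma stk_eq_reverse {α : Type*} (next : α → α) (x : α) (k : ℕ) :
    stk next x k = ((List.range (k+1)).map (fun i => next^[i] x)).reverse := by
  induction k with
  | zero => rfl
  | succ k ih => rw [stk, ih, List.range_succ (n := k+1)]; simp

lemma rDown_eq_foldr {α β : Type*} (G : α → β → β) (e : β) (next : α → α) (x : α) (n : ℕ) :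
    ∀ j ≤ n, rDown G e next x n j =
      ((List.range' j (n - j)).map (fun i => next^[i] x)).foldr G e := by
  suffices h : ∀ d j, j ≤ n → n - j = d →
      rDown G e next x n j =
        ((List.range' j (n - j)).map (fun i => next^[i] x)).foldr G e by
    intro j hj; exact h (n - j) j hj rfl
  intro d
  induction d with
  | zero =>
    intro j hj hd
    rw [rDown, if_neg (by omega)]
    simp [hd]
  | succ d ihd =>
    intro j hj hd
    rw [rDown, if_pos (by omega), hd, List.range'_succ]
    simp only [List.map_cons, List.foldr_cons]
    rw [ihd (j+1) (by omega) (by omega)]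
    have : n - (j+1) = d := by omega
    rw [this]

lemma rDown_ge {α β : Type*} (G : α → β → β) (e : β) (next : α → α) (x : α) (n j : ℕ)
    (hj : n ≤ j) : rDown G e next x n j = e := by
  rw [rDown, if_neg (by omega)]

/-- Suppose `P (next^[n] x)` holds and `P (next^[i] x)` fails for every
`i < n`.  If `N ≥ n`, then `I x N = G x (G (next x) (⋯ (G (next^[n-1] x) e) ⋯))`;
equivalently, `I x N = r 0` where `r` is defined downward as in `rDown`.  In particular,
`I x N` equals the value at `x` of (any function `R` satisfying) the bounded recursion
`R y = if P y then e else G y (R (next y))`. -/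
theorem Ifold_eq_rDown {α β : Type*} [Inhabited α]
    (P : α → Prop) [DecidablePred P] (next : α → α) (G : α → β → β) (e : β)
    (x : α) (n : ℕ)
    (hn : P (next^[n] x))
    (hlt : ∀ i < n, ¬ P (next^[i] x))
    (N : ℕ) (hN : N ≥ n) :
    Ifold P next G e x N = rDown G e next x n 0 ∧
      ∀ R : α → β, (∀ y, R y = if P y then e else G y (R (next y))) →
        Ifold P next G e x N = R x := by
  have hstack : Stack P next x N = stk next x n := Stack_ge P next x n hn hlt N hN
  have hI : Ifold P next G e x N = rDown G e next x n 0 := by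
    rw [Ifold, hstack]
    cases n with
    | zero =>
      simp [stk, rDown_ge G e next x 0 0 le_rfl]
    | succ k =>
      have htail : (stk next x (k+1)).tail = stk next x k := rfl
      rw [htail, stk_eq_reverse, List.foldl_reverse,
        rDown_eq_foldr G e next x (k+1) 0 (by omega)]
      simp [List.range_eq_range']
  refine ⟨hI, ?_⟩
  intro R hR
  rw [hI]
  suffices h : ∀ d j, j + d = n → R (next^[j] x) = rDown G e next x n j by
    have := h n 0 (by omega)
    simp only [Function.iterate_zero, id_eq] at this
    rw [this]
  intro d
  induction d with
  | zero =>
    intro j hj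
    have hjn : j = n := by omega
    subst hjn
    rw [hR, if_pos hn, rDown_ge G e next x j j le_rfl]
  | succ d ih =>
    intro j hj
    rw [hR, if_neg (hlt j (by omega)), rDown, if_pos (by omega),
      ← Function.iterate_succ_apply' next j x, ih (j+1) (by omega)]
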